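/- Let m_X, m_Y, Ω_X, Ω_Y, α, C > 0 be real numbers, let γ_th > 0 be fixed, and for each γ̄ > 0 let f_{γ̄} be the α-Beaulieu-Xie shadowed SNR probability density with average SNR γ̄ and normalizing constant C. Then, as γ̄ → ∞, the outage probability P_out(γ̄) = ∫₀^{γ_th} f_{γ̄}(γ) dγ satisfies lim_{γ̄ → ∞} γ̄^{α m_X/2} · P_out(γ̄) = θ^{m_Y} γ_th^{α m_X/2}/(C^{m_X} Γ(m_X + 1)); equivalently, P_out(γ̄) is asymptotically equal to the upper bound P_out^{UB}(γ̄) = (θ^{m_Y}/(C^{m_X} Γ(m_X + 1))) (γ_th/γ̄)^{α m_X/2} in the sense that P_out(γ̄)/P_out^{UB}(γ̄) → 1. -/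

import Mathlib

open Real MeasureTheory Set

/-- Pochhammer symbol `(q)_n = q (q+1) ⋯ (q+n-1)`, with `(q)_0 = 1`. -/
noncomputable def poch (q : ℝ) (n : ℕ) : ℝ := ∏ i ∈ Finset.range n, (q + i)

/-- Confluent (Kummer) hypergeometric function `₁F₁(a; b; z)`. -/
noncomputable def oneF1 (a b z : ℝ) : ℝ :=
  ∑' n : ℕ, (poch a n / poch b n) * z ^ n / (n.factorial : ℝ)

/-- Gauss hypergeometric function `₂F₁(a, b; c; z)`. -/
noncomputable def twoF1 (a b c z : ℝ) : ℝ :=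
  ∑' n : ℕ, (poch a n * poch b n / poch c n) * z ^ n / (n.factorial : ℝ)

/-- Confluent Appell (Humbert) function `Φ₂(b₁, b₂; c; x, y)`. -/
noncomputable def Phi2 (b₁ b₂ c x y : ℝ) : ℝ :=
  ∑' p : ℕ × ℕ, (poch b₁ p.1 * poch b₂ p.2 / poch c (p.1 + p.2)) *
    x ^ p.1 * y ^ p.2 / ((p.1.factorial : ℝ) * (p.2.factorial : ℝ))

/-- The α-Beaulieu-Xie shadowed SNR probability density with parameters
`mX, mY, ΩX, ΩY, α`, average SNR `γbar` and normalizing constant `C`, where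
`θ = mY ΩX / (mY ΩX + mX ΩY)` and `δ = mX ΩY / (mY ΩX + mX ΩY)`. -/
noncomputable def aBXpdf (mX mY ΩX ΩY α γbar C γ : ℝ) : ℝ :=
  (α * (mY * ΩX / (mY * ΩX + mX * ΩY)) ^ mY / (2 * C ^ mX * Real.Gamma mX * γbar)) *
    (γ / γbar) ^ (α * mX / 2 - 1) * Real.exp (-(1 / C) * (γ / γbar) ^ (α / 2)) *
    oneF1 mY mX ((mX * ΩY / (mY * ΩX + mX * ΩY)) / C * (γ / γbar) ^ (α / 2))

lemma poch_pos {q : ℝ} (hq : 0 < q) (n : ℕ) : 0 < poch q n :=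
  Finset.prod_pos fun i _ => by positivity

lemma poch_succ (q : ℝ) (n : ℕ) : poch q (n + 1) = poch q n * (q + n) :=
  Finset.prod_range_succ _ _

lemma term_nonneg {a b : ℝ} (ha : 0 < a) (hb : 0 < b) {z : ℝ} (hz : 0 ≤ z) (n : ℕ) :
    0 ≤ poch a n / poch b n * z ^ n / (n.factorial : ℝ) := by
  have h1 := poch_pos ha n; have h2 := poch_pos hb n
  have : (0:ℝ) < n.factorial := by positivity
  positivity

lemma summable_terms {a b : ℝ} (ha : 0 < a) (hb : 0 < b) (z : ℝ) :
    Summable (fun n : ℕ => poch a n / poch b n * z ^ n / (n.factorial : ℝ)) := by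
  apply summable_of_ratio_norm_eventually_le (r := 1/2) (by norm_num)
  filter_upwards [Filter.eventually_ge_atTop (⌈2 * (a + 1) * (|z| + 1)⌉₊ + 1)] with n hn
  have hn' : (2 * (a + 1) * (|z| + 1)) ≤ n := by
    calc (2 * (a + 1) * (|z| + 1)) ≤ (⌈2 * (a + 1) * (|z| + 1)⌉₊ : ℝ) := Nat.le_ceil _
    _ ≤ n := by exact_mod_cast Nat.le_of_succ_le hn
  have hpa := poch_pos ha n; have hpb := poch_pos hb n
  have hfac : (0:ℝ) < n.factorial := by positivity
  have key : |poch a (n+1) / poch b (n+1) * z ^ (n+1) / ((n+1).factorial : ℝ)|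
      = |poch a n / poch b n * z ^ n / (n.factorial : ℝ)| * ((a + n) * |z| / ((b + n) * (n + 1))) := by
    rw [poch_succ, poch_succ, Nat.factorial_succ]
    have han : (0:ℝ) < a + n := by positivity
    have hbn : (0:ℝ) < b + n := by positivity
    rw [abs_div, abs_div, abs_mul, abs_mul, abs_div, abs_div, abs_mul, abs_mul, pow_succ, abs_mul]
    rw [abs_of_pos hpa, abs_of_pos hpb, abs_of_pos han, abs_of_pos hbn,
      abs_of_pos hfac, Nat.abs_cast]
    push_cast
    field_simp
  simp only [Real.norm_eq_abs]
  rw [key]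
  have han : (0:ℝ) < a + n := by positivity
  have hbn : (0:ℝ) < b + n := by positivity
  have hratio : (a + n) * |z| / ((b + n) * (n + 1)) ≤ 1/2 := by
    rw [div_le_iff₀ (by positivity)]
    have h1 : a + n ≤ (a+1) * (n+1) := by nlinarith [Nat.cast_nonneg (α := ℝ) n]
    nlinarith [Nat.cast_nonneg (α := ℝ) n, abs_nonneg z]
  calc |poch a n / poch b n * z ^ n / (n.factorial : ℝ)| * ((a + n) * |z| / ((b + n) * (n + 1)))
      ≤ |poch a n / poch b n * z ^ n / (n.factorial : ℝ)| * (1/2) := by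
        apply mul_le_mul_of_nonneg_left hratio (abs_nonneg _)
    _ = 1/2 * |poch a n / poch b n * z ^ n / (n.factorial : ℝ)| := by ring

lemma oneF1_ge_one {a b : ℝ} (ha : 0 < a) (hb : 0 < b) {z : ℝ} (hz : 0 ≤ z) :
    1 ≤ oneF1 a b z := by
  have hs := summable_terms ha hb z
  have h0 : poch a 0 / poch b 0 * z ^ 0 / ((Nat.factorial 0 : ℕ) : ℝ) = 1 := by
    simp [poch]
  rw [oneF1, ← h0]
  exact Summable.le_tsum hs 0 fun i _ => term_nonneg ha hb hz i

set_option maxHeartbeats 1000000 in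
lemma oneF1_le_one_add {a b : ℝ} (ha : 0 < a) (hb : 0 < b) {z : ℝ} (hz : 0 ≤ z) (hz1 : z ≤ 1) :
    oneF1 a b z ≤ 1 + z * oneF1 a b 1 := by
  have hs := summable_terms ha hb z
  have hs1 := summable_terms ha hb 1
  have hss : Summable (fun n : ℕ =>
      poch a (n+1) / poch b (n+1) * z ^ (n+1) / ((n+1).factorial : ℝ)) :=
    (summable_nat_add_iff 1).2 hs
  have hss1 : Summable (fun n : ℕ =>
      poch a (n+1) / poch b (n+1) * (1:ℝ) ^ (n+1) / ((n+1).factorial : ℝ)) :=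
    (summable_nat_add_iff 1).2 hs1
  have h0 : poch a 0 / poch b 0 * z ^ 0 / ((Nat.factorial 0 : ℕ) : ℝ) = 1 := by simp [poch]
  rw [oneF1, Summable.tsum_eq_zero_add hs, h0]
  have step1 : ∑' n : ℕ, poch a (n+1) / poch b (n+1) * z ^ (n+1) / ((n+1).factorial : ℝ)
      ≤ ∑' n : ℕ, z * (poch a (n+1) / poch b (n+1) * (1:ℝ) ^ (n+1) / ((n+1).factorial : ℝ)) := by
    apply Summable.tsum_le_tsum _ hss (hss1.mul_left z)
    intro n
    have hc : (0:ℝ) ≤ poch a (n+1) / poch b (n+1) / ((n+1).factorial : ℝ) := by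
      have h1 := poch_pos ha (n+1); have h2 := poch_pos hb (n+1)
      have : (0:ℝ) < (n+1).factorial := by positivity
      positivity
    have hzp : z ^ (n+1) ≤ z := by
      calc z ^ (n+1) = z * z ^ n := by ring
        _ ≤ z * 1 := by
            apply mul_le_mul_of_nonneg_left (pow_le_one₀ hz hz1) hz
        _ = z := by ring
    calc poch a (n+1) / poch b (n+1) * z ^ (n+1) / ((n+1).factorial : ℝ)
        = (poch a (n+1) / poch b (n+1) / ((n+1).factorial : ℝ)) * z ^ (n+1) := by ring
      _ ≤ (poch a (n+1) / poch b (n+1) / ((n+1).factorial : ℝ)) * z :=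
          mul_le_mul_of_nonneg_left hzp hc
      _ = z * (poch a (n+1) / poch b (n+1) * (1:ℝ) ^ (n+1) / ((n+1).factorial : ℝ)) := by
          rw [one_pow]; ring
  have step2 : ∑' n : ℕ, z * (poch a (n+1) / poch b (n+1) * (1:ℝ) ^ (n+1) / ((n+1).factorial : ℝ))
      = z * ∑' n : ℕ, poch a (n+1) / poch b (n+1) * (1:ℝ) ^ (n+1) / ((n+1).factorial : ℝ) :=
    tsum_mul_left
  have step3 : ∑' n : ℕ, poch a (n+1) / poch b (n+1) * (1:ℝ) ^ (n+1) / ((n+1).factorial : ℝ)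
      ≤ oneF1 a b 1 := by
    have h01 : poch a 0 / poch b 0 * (1:ℝ) ^ 0 / ((Nat.factorial 0 : ℕ) : ℝ) = 1 := by simp [poch]
    rw [oneF1, Summable.tsum_eq_zero_add hs1, h01]
    linarith
  have := step1.trans_eq step2
  nlinarith [mul_le_mul_of_nonneg_left step3 hz]

lemma measurable_oneF1 {a b : ℝ} (ha : 0 < a) (hb : 0 < b) :
    Measurable (oneF1 a b) := by
  apply measurable_of_tendsto_metrizable
    (f := fun N z => ∑ n ∈ Finset.range N, poch a n / poch b n * z ^ n / (n.factorial : ℝ))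
  · intro N
    apply Finset.measurable_sum
    intro n _
    exact ((measurable_id.pow_const n).const_mul _).div_const _
  · rw [tendsto_pi_nhds]
    intro z
    exact (summable_terms ha hb z).hasSum.tendsto_sum_nat

set_option maxHeartbeats 2000000 in
/-- High-SNR asymptotics of the outage probability: as `γ̄ → ∞`,
`γ̄^{α m_X/2} P_out(γ̄) → θ^{m_Y} γ_th^{α m_X/2} / (C^{m_X} Γ(m_X + 1))`;
equivalently, `P_out / P_out^{UB} → 1`. -/
theorem statement_10 (mX mY ΩX ΩY α C : ℝ) (hmX : 0 < mX) (hmY : 0 < mY)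
    (hΩX : 0 < ΩX) (hΩY : 0 < ΩY) (hα : 0 < α) (hC : 0 < C)
    (γth : ℝ) (hγth : 0 < γth) :
    Filter.Tendsto
        (fun γbar : ℝ => γbar ^ (α * mX / 2) *
          ∫ γ in Set.Ioc (0 : ℝ) γth, aBXpdf mX mY ΩX ΩY α γbar C γ)
        Filter.atTop
        (nhds ((mY * ΩX / (mY * ΩX + mX * ΩY)) ^ mY * γth ^ (α * mX / 2) /
          (C ^ mX * Real.Gamma (mX + 1)))) ∧
      Filter.Tendsto
        (fun γbar : ℝ =>
          (∫ γ in Set.Ioc (0 : ℝ) γth, aBXpdf mX mY ΩX ΩY α γbar C γ) /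
            ((mY * ΩX / (mY * ΩX + mX * ΩY)) ^ mY / (C ^ mX * Real.Gamma (mX + 1)) *
              (γth / γbar) ^ (α * mX / 2)))
        Filter.atTop (nhds 1) := by
  have hden : 0 < mY * ΩX + mX * ΩY := by positivity
  set θ := mY * ΩX / (mY * ΩX + mX * ΩY) with hθdef
  set δ := mX * ΩY / (mY * ΩX + mX * ΩY) with hδdef
  have hθ : 0 < θ := by rw [hθdef]; positivity
  have hδ : 0 ≤ δ := by rw [hδdef]; positivity
  set p := α * mX / 2 with hpdef
  have hp : 0 < p := by rw [hpdef]; positivity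
  have hΓ : 0 < Real.Gamma mX := Real.Gamma_pos_of_pos hmX
  have hCm : 0 < C ^ mX := Real.rpow_pos_of_pos hC mX
  have hθm : 0 < θ ^ mY := Real.rpow_pos_of_pos hθ mY
  set K := α * θ ^ mY / (2 * C ^ mX * Real.Gamma mX) with hKdef
  have hK : 0 < K := by rw [hKdef]; positivity
  have hγthp : 0 < γth ^ p := Real.rpow_pos_of_pos hγth p
  have hΓ1 : Real.Gamma (mX + 1) = mX * Real.Gamma mX := Real.Gamma_add_one hmX.ne'
  set L := θ ^ mY * γth ^ p / (C ^ mX * Real.Gamma (mX + 1)) with hLdef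
  have hα' : α ≠ 0 := hα.ne'
  have hmX' : mX ≠ 0 := hmX.ne'
  have hΓ' : Real.Gamma mX ≠ 0 := hΓ.ne'
  have hCm' : C ^ mX ≠ 0 := hCm.ne'
  have hL : L = K * (γth ^ p / p) := by
    rw [hLdef, hKdef, hΓ1, hpdef]
    field_simp
  have hLpos : 0 < L := by rw [hL]; positivity
  set S1 := oneF1 mY mX 1 with hS1def
  have hS1 : 1 ≤ S1 := oneF1_ge_one hmY hmX zero_le_one
  have hS1' : 0 ≤ S1 := by linarith
  have hval : ∫ γ in Set.Ioc (0:ℝ) γth, γ ^ (p - 1) = γth ^ p / p := by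
    rw [← intervalIntegral.integral_of_le hγth.le]
    rw [integral_rpow (Or.inl (by linarith))]
    rw [show p - 1 + 1 = p from by ring, Real.zero_rpow hp.ne']
    ring
  have hpow : IntegrableOn (fun γ : ℝ => γ ^ (p - 1)) (Set.Ioc (0:ℝ) γth) volume := by
    have h := intervalIntegral.intervalIntegrable_rpow' (a := 0) (b := γth) (show (-1:ℝ) < p - 1 by linarith)
    rw [intervalIntegrable_iff, Set.uIoc_of_le hγth.le] at h
    exact h
  -- main estimate
  have hmain : ∀ η : ℝ, 0 < η → η ≤ 1 → ∀ᶠ γbar in Filter.atTop,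
      |γbar ^ p * (∫ γ in Set.Ioc (0:ℝ) γth, aBXpdf mX mY ΩX ΩY α γbar C γ) - L| ≤ η * L := by
    intro η hη hη1
    set Tmax := min (C / (δ + 1)) (C * η / (δ * S1 + 1)) with hTm
    have hTmpos : 0 < Tmax := lt_min (by positivity) (by positivity)
    have hTten : Filter.Tendsto (fun γbar : ℝ => (γth / γbar) ^ (α/2))
        Filter.atTop (nhds 0) := by
      have h1 : Filter.Tendsto (fun γbar : ℝ => γth / γbar) Filter.atTop (nhds 0) := by
        simpa [div_eq_mul_inv] using
          (tendsto_inv_atTop_zero (𝕜 := ℝ)).const_mul γth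
      have h2 := ((Real.continuousAt_rpow_const 0 (α/2)
        (Or.inr (by positivity))).tendsto).comp h1
      simpa [Function.comp_def, Real.zero_rpow (show (α:ℝ)/2 ≠ 0 by positivity)] using h2
    filter_upwards [Filter.eventually_ge_atTop (1:ℝ),
      hTten (Iio_mem_nhds hTmpos)] with γbar hγb hTlt
    have hγb0 : 0 < γbar := lt_of_lt_of_le one_pos hγb
    simp only [Set.mem_preimage, Set.mem_Iio] at hTlt
    have hTle : (γth / γbar) ^ (α/2) ≤ Tmax := le_of_lt hTlt
    have hub1 : Tmax ≤ C / (δ + 1) := min_le_left _ _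
    have hub2 : Tmax ≤ C * η / (δ * S1 + 1) := min_le_right _ _
    -- pointwise bounds for the non-power factor
    have hgbound : ∀ γ ∈ Set.Ioc (0:ℝ) γth,
        1 - η ≤ Real.exp (-(1 / C) * (γ / γbar) ^ (α / 2)) *
            oneF1 mY mX (δ / C * (γ / γbar) ^ (α / 2)) ∧
          Real.exp (-(1 / C) * (γ / γbar) ^ (α / 2)) *
            oneF1 mY mX (δ / C * (γ / γbar) ^ (α / 2)) ≤ 1 + η := by
      intro γ hγ
      obtain ⟨hγ0, hγle⟩ := hγ
      set t := (γ / γbar) ^ (α / 2) with htdef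
      have ht0 : 0 ≤ t := Real.rpow_nonneg (by positivity) _
      have htT : t ≤ Tmax := by
        refine le_trans ?_ hTle
        exact Real.rpow_le_rpow (by positivity) ((div_le_div_iff_of_pos_right hγb0).2 hγle)
          (by positivity)
      have h1 : t * (δ + 1) ≤ C := by
        have := htT.trans hub1
        rw [le_div_iff₀ (by positivity)] at this
        linarith
      have h2 : t * (δ * S1 + 1) ≤ C * η := by
        have := htT.trans hub2
        rw [le_div_iff₀ (by positivity)] at this
        linarith
      have hz0 : 0 ≤ δ / C * t := by positivity
      have hz1 : δ / C * t ≤ 1 := by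
        rw [div_mul_eq_mul_div, div_le_one hC]
        nlinarith
      have hzS : δ / C * t * S1 ≤ η := by
        rw [div_mul_eq_mul_div, div_mul_eq_mul_div, div_le_iff₀ hC]
        nlinarith [mul_nonneg (mul_nonneg hδ ht0) hS1']
      have htC' : t ≤ C * η := by
        nlinarith [mul_nonneg (mul_nonneg hδ ht0) hS1']
      have htC : (1 / C) * t ≤ η := by
        rw [div_mul_eq_mul_div, one_mul, div_le_iff₀ hC]
        linarith
      have hF1 : 1 ≤ oneF1 mY mX (δ / C * t) := oneF1_ge_one hmY hmX hz0
      have hFle : oneF1 mY mX (δ / C * t) ≤ 1 + (δ / C * t) * S1 := by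
        have := oneF1_le_one_add hmY hmX hz0 hz1
        rw [← hS1def] at this
        linarith [this]
      have hexple : Real.exp (-(1 / C) * t) ≤ 1 := by
        apply Real.exp_le_one_iff.2
        have h5 : 0 ≤ (1 / C) * t := by positivity
        linarith
      have hexpge : 1 - η ≤ Real.exp (-(1 / C) * t) := by
        have h6 := Real.add_one_le_exp (-(1 / C) * t)
        linarith
      have hexppos : 0 < Real.exp (-(1 / C) * t) := Real.exp_pos _
      constructor
      · calc 1 - η ≤ Real.exp (-(1 / C) * t) := hexpge
          _ = Real.exp (-(1 / C) * t) * 1 := by ring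
          _ ≤ Real.exp (-(1 / C) * t) * oneF1 mY mX (δ / C * t) :=
              mul_le_mul_of_nonneg_left hF1 hexppos.le
      · calc Real.exp (-(1 / C) * t) * oneF1 mY mX (δ / C * t)
            ≤ 1 * oneF1 mY mX (δ / C * t) :=
              mul_le_mul_of_nonneg_right hexple (by linarith)
          _ = oneF1 mY mX (δ / C * t) := one_mul _
          _ ≤ 1 + (δ / C * t) * S1 := hFle
          _ ≤ 1 + η := by linarith
    -- measurability of the integrand pieces
    have ht_cont : Continuous (fun γ : ℝ => (γ / γbar) ^ (α/2)) :=
      (Real.continuous_rpow_const (by positivity)).comp (continuous_id.div_const γbar)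
    have hg_meas : Measurable (fun γ : ℝ => Real.exp (-(1 / C) * (γ / γbar) ^ (α / 2)) *
        oneF1 mY mX (δ / C * (γ / γbar) ^ (α / 2))) := by
      have hexp : Measurable (fun γ : ℝ => Real.exp (-(1 / C) * (γ / γbar) ^ (α / 2))) :=
        Real.measurable_exp.comp ((ht_cont.measurable).const_mul (-(1/C)))
      have hF : Measurable (fun γ : ℝ => oneF1 mY mX (δ / C * (γ / γbar) ^ (α / 2))) :=
        (measurable_oneF1 hmY hmX).comp ((ht_cont.measurable).const_mul (δ/C))
      exact hexp.mul hF
    have hpm : AEMeasurable (fun γ : ℝ => γ ^ (p - 1))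
        (volume.restrict (Set.Ioc (0:ℝ) γth)) := by
      apply ContinuousOn.aemeasurable _ measurableSet_Ioc
      intro x hx
      exact (Real.continuousAt_rpow_const x _ (Or.inl (ne_of_gt hx.1))).continuousWithinAt
    have hprod_meas : AEStronglyMeasurable
        (fun γ : ℝ => γ ^ (p - 1) * (Real.exp (-(1 / C) * (γ / γbar) ^ (α / 2)) *
          oneF1 mY mX (δ / C * (γ / γbar) ^ (α / 2))))
        (volume.restrict (Set.Ioc (0:ℝ) γth)) :=
      (hpm.mul hg_meas.aemeasurable).aestronglyMeasurable
    -- integrability of the product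
    have hint : IntegrableOn
        (fun γ : ℝ => γ ^ (p - 1) * (Real.exp (-(1 / C) * (γ / γbar) ^ (α / 2)) *
          oneF1 mY mX (δ / C * (γ / γbar) ^ (α / 2)))) (Set.Ioc (0:ℝ) γth) volume := by
      apply Integrable.mono' (hpow.const_mul 2) hprod_meas
      rw [ae_restrict_iff' measurableSet_Ioc]
      apply Filter.Eventually.of_forall
      intro γ hγ
      obtain ⟨hlo, hhi⟩ := hgbound γ hγ
      have hγ0 : 0 < γ := hγ.1
      have hγp : 0 < γ ^ (p - 1) := Real.rpow_pos_of_pos hγ0 _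
      have hg0 : 0 ≤ Real.exp (-(1 / C) * (γ / γbar) ^ (α / 2)) *
          oneF1 mY mX (δ / C * (γ / γbar) ^ (α / 2)) := le_trans (by linarith) hlo
      rw [Real.norm_eq_abs, abs_of_nonneg (mul_nonneg hγp.le hg0)]
      calc γ ^ (p - 1) * (Real.exp (-(1 / C) * (γ / γbar) ^ (α / 2)) *
          oneF1 mY mX (δ / C * (γ / γbar) ^ (α / 2)))
          ≤ γ ^ (p - 1) * 2 := mul_le_mul_of_nonneg_left (by linarith) hγp.le
        _ = 2 * γ ^ (p - 1) := mul_comm _ _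
    -- the integral identity
    have hinteq : (∫ γ in Set.Ioc (0:ℝ) γth, aBXpdf mX mY ΩX ΩY α γbar C γ)
        = K * γbar ^ (-p) * ∫ γ in Set.Ioc (0:ℝ) γth,
            γ ^ (p - 1) * (Real.exp (-(1 / C) * (γ / γbar) ^ (α / 2)) *
              oneF1 mY mX (δ / C * (γ / γbar) ^ (α / 2))) := by
      rw [← MeasureTheory.integral_const_mul]
      apply setIntegral_congr_fun measurableSet_Ioc
      intro γ hγ
      have hγ0 : 0 < γ := hγ.1
      have hbp : (0:ℝ) < γbar ^ p := Real.rpow_pos_of_pos hγb0 _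
      show aBXpdf mX mY ΩX ΩY α γbar C γ = _
      rw [aBXpdf]
      rw [← hθdef, ← hδdef, ← hpdef]
      rw [Real.div_rpow hγ0.le hγb0.le, Real.rpow_sub hγb0, Real.rpow_one,
        Real.rpow_neg hγb0.le, hKdef]
      have hγb' : γbar ≠ 0 := hγb0.ne'
      have hbp' : γbar ^ p ≠ 0 := hbp.ne'
      field_simp
    -- the sandwich
    have hlowint : (1 - η) * (γth ^ p / p) ≤ ∫ γ in Set.Ioc (0:ℝ) γth,
        γ ^ (p - 1) * (Real.exp (-(1 / C) * (γ / γbar) ^ (α / 2)) *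
          oneF1 mY mX (δ / C * (γ / γbar) ^ (α / 2))) := by
      have h := setIntegral_mono_on (hpow.const_mul (1 - η)) hint measurableSet_Ioc ?_
      · rw [MeasureTheory.integral_const_mul, hval] at h
        exact h
      · intro γ hγ
        have hγp : 0 ≤ γ ^ (p - 1) := Real.rpow_nonneg hγ.1.le _
        have h7 := (hgbound γ hγ).1
        calc (1 - η) * γ ^ (p - 1) = γ ^ (p - 1) * (1 - η) := mul_comm _ _
          _ ≤ _ := mul_le_mul_of_nonneg_left h7 hγp
    have hupint : (∫ γ in Set.Ioc (0:ℝ) γth,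
        γ ^ (p - 1) * (Real.exp (-(1 / C) * (γ / γbar) ^ (α / 2)) *
          oneF1 mY mX (δ / C * (γ / γbar) ^ (α / 2)))) ≤ (1 + η) * (γth ^ p / p) := by
      have h := setIntegral_mono_on hint (hpow.const_mul (1 + η)) measurableSet_Ioc ?_
      · rw [MeasureTheory.integral_const_mul, hval] at h
        exact h
      · intro γ hγ
        have hγp : 0 ≤ γ ^ (p - 1) := Real.rpow_nonneg hγ.1.le _
        have h8 := (hgbound γ hγ).2
        calc γ ^ (p - 1) * (Real.exp (-(1 / C) * (γ / γbar) ^ (α / 2)) *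
            oneF1 mY mX (δ / C * (γ / γbar) ^ (α / 2)))
            ≤ γ ^ (p - 1) * (1 + η) := mul_le_mul_of_nonneg_left h8 hγp
          _ = (1 + η) * γ ^ (p - 1) := mul_comm _ _
    -- conclude
    rw [hinteq]
    have hbp : (0:ℝ) < γbar ^ p := Real.rpow_pos_of_pos hγb0 _
    have hcancel : γbar ^ p * (K * γbar ^ (-p) *
        (∫ γ in Set.Ioc (0:ℝ) γth,
          γ ^ (p - 1) * (Real.exp (-(1 / C) * (γ / γbar) ^ (α / 2)) *
            oneF1 mY mX (δ / C * (γ / γbar) ^ (α / 2)))))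
        = K * ∫ γ in Set.Ioc (0:ℝ) γth,
          γ ^ (p - 1) * (Real.exp (-(1 / C) * (γ / γbar) ^ (α / 2)) *
            oneF1 mY mX (δ / C * (γ / γbar) ^ (α / 2))) := by
      rw [Real.rpow_neg hγb0.le]
      field_simp
      congr 1; ext γ; ring_nf
    rw [hcancel]
    rw [abs_le]
    have heq1 : K * ((1 - η) * (γth ^ p / p)) = L - η * L := by rw [hL]; ring
    have heq2 : K * ((1 + η) * (γth ^ p / p)) = L + η * L := by rw [hL]; ring
    constructor
    · have := mul_le_mul_of_nonneg_left hlowint hK.le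
      linarith
    · have := mul_le_mul_of_nonneg_left hupint hK.le
      linarith
  -- first limit
  have ht1 : Filter.Tendsto
      (fun γbar : ℝ => γbar ^ p *
        ∫ γ in Set.Ioc (0 : ℝ) γth, aBXpdf mX mY ΩX ΩY α γbar C γ)
      Filter.atTop (nhds L) := by
    rw [Metric.tendsto_atTop]
    intro ε hε
    have hηpos : 0 < min 1 (ε / (2 * L)) := lt_min one_pos (by positivity)
    have hηle : min 1 (ε / (2 * L)) ≤ 1 := min_le_left _ _
    obtain ⟨N, hN⟩ := Filter.eventually_atTop.1 (hmain _ hηpos hηle)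
    refine ⟨N, fun γbar hγb => ?_⟩
    have h := hN γbar hγb
    rw [Real.dist_eq]
    calc |γbar ^ p * (∫ γ in Set.Ioc (0:ℝ) γth, aBXpdf mX mY ΩX ΩY α γbar C γ) - L|
        ≤ min 1 (ε / (2 * L)) * L := h
      _ ≤ (ε / (2 * L)) * L := mul_le_mul_of_nonneg_right (min_le_right _ _) hLpos.le
      _ = ε / 2 := by field_simp
      _ < ε := by linarith
  refine ⟨ht1, ?_⟩
  have ht2 := ht1.div_const L
  rw [div_self hLpos.ne'] at ht2
  apply ht2.congr'
  filter_upwards [Filter.eventually_gt_atTop (0:ℝ)] with γbar hγb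
  have hγbp : (0:ℝ) < γbar ^ p := Real.rpow_pos_of_pos hγb _
  have hΓ1pos : 0 < Real.Gamma (mX + 1) := by rw [hΓ1]; positivity
  have h9 : γbar ^ p ≠ 0 := hγbp.ne'
  have h10 : Real.Gamma (mX + 1) ≠ 0 := hΓ1pos.ne'
  have h11 : θ ^ mY ≠ 0 := hθm.ne'
  have h12 : γth ^ p ≠ 0 := hγthp.ne'
  rw [Real.div_rpow hγth.le hγb.le, hLdef]
  field_simp
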